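/- For a real random variable X with mean μ, variance σ², and β = Pr(X ≤ 0) ∈ (0,1), it holds that E[min(X, 0)] ≥ μβ - σ·sqrt(β(1 - β)). -/

import Mathlib

open MeasureTheory ProbabilityTheory Real

/-- With `β = Pr(X ≤ 0) ∈ (0,1)`, `E[min(X, 0)] ≥ μβ - σ·√(β(1 - β))`. -/
theorem expected_min_ge {Ω : Type*} [MeasureSpace Ω]
    [IsProbabilityMeasure (ℙ : Measure Ω)]
    (X : Ω → ℝ) (μ σ β : ℝ)
    (hmeas : Measurable X) (hL2 : MemLp X 2 ℙ)
    (hmean : ∫ ω, X ω ∂ℙ = μ)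
    (hvar : variance X ℙ = σ ^ 2) (hσ : 0 ≤ σ)
    (hβ : (ℙ {ω | X ω ≤ 0}).toReal = β)
    (hβ0 : 0 < β) (hβ1 : β < 1) :
    μ * β - σ * Real.sqrt (β * (1 - β)) ≤ ∫ ω, min (X ω) 0 ∂ℙ := by
  set A := {ω | X ω ≤ 0} with hAdef
  have hA : MeasurableSet A := hmeas measurableSet_Iic
  have hXint : Integrable X ℙ := hL2.integrable one_le_two
  set f : Ω → ℝ := fun ω => X ω - μ with hfdef
  set g : Ω → ℝ := fun ω => A.indicator (fun _ => (1 : ℝ)) ω - β with hgdef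
  have hfL2 : MemLp f 2 ℙ := hL2.sub (memLp_const μ)
  have hgL2 : MemLp g 2 ℙ := ((memLp_const (1 : ℝ)).indicator hA).sub (memLp_const β)
  have hind_int : Integrable (A.indicator (fun _ => (1 : ℝ))) ℙ :=
    (integrable_const (1 : ℝ)).indicator hA
  have hind : ∫ ω, A.indicator (fun _ => (1 : ℝ)) ω ∂ℙ = β := by
    rw [integral_indicator_const _ hA]
    simp [hβ]
    exact hβ
  have hmin : ∀ ω, min (X ω) 0 = A.indicator X ω := by
    intro ω
    simp only [Set.indicator_apply, hAdef, Set.mem_setOf_eq]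
    rcases le_or_gt (X ω) 0 with h | h
    · simp [h, min_eq_left h]
    · simp [not_le.mpr h, min_eq_right h.le]
  have hIint : Integrable (A.indicator X) ℙ := hXint.indicator hA
  have hprod : (fun ω => f ω * g ω) =
      fun ω => A.indicator X ω - β * X ω - μ * A.indicator (fun _ => (1 : ℝ)) ω + μ * β := by
    funext ω
    by_cases h : ω ∈ A <;>
      simp only [hfdef, hgdef, Set.indicator_of_mem, Set.indicator_of_notMem, h,
        if_pos, if_neg, not_false_iff] <;> ring
  have hI1 : Integrable (fun ω => A.indicator X ω - β * X ω) ℙ :=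
    hIint.sub (hXint.const_mul β)
  have hI2 : Integrable
      (fun ω => A.indicator X ω - β * X ω - μ * A.indicator (fun _ => (1 : ℝ)) ω) ℙ :=
    hI1.sub (hind_int.const_mul μ)
  have hfg : ∫ ω, f ω * g ω ∂ℙ = (∫ ω, A.indicator X ω ∂ℙ) - μ * β := by
    rw [hprod, integral_add hI2 (integrable_const _),
      integral_sub hI1 (hind_int.const_mul μ),
      integral_sub hIint (hXint.const_mul β), integral_const_mul, integral_const_mul, hind,
      hmean, integral_const]
    simp only [probReal_univ, measure_univ, ENNReal.toReal_one, smul_eq_mul, one_mul]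
    ring
  have hf2 : ∫ ω, f ω ^ 2 ∂ℙ = σ ^ 2 := by
    rw [← hvar, variance_eq_integral hL2.aemeasurable]
    have : ℙ[X] = μ := hmean
    rw [this]
  have hg2 : ∫ ω, g ω ^ 2 ∂ℙ = β * (1 - β) := by
    have h1 : ∀ ω, g ω ^ 2 = A.indicator (fun _ => (1 : ℝ)) ω * (1 - 2 * β) + β ^ 2 := by
      intro ω
      by_cases h : ω ∈ A <;>
        simp only [hgdef, Set.indicator_of_mem, Set.indicator_of_notMem, h,
          not_false_iff] <;> ring
    simp_rw [h1]
    rw [integral_add (hind_int.mul_const _) (integrable_const _), integral_mul_const, hind,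
      integral_const]
    simp only [probReal_univ, measure_univ, ENNReal.toReal_one, smul_eq_mul, one_mul]
    ring
  have h2 : (2 : ℝ).HolderConjugate 2 := Real.HolderConjugate.two_two
  have hfL2' : MemLp f (ENNReal.ofReal 2) ℙ := by
    rw [ENNReal.ofReal_ofNat]; exact hfL2
  have hgL2' : MemLp g (ENNReal.ofReal 2) ℙ := by
    rw [ENNReal.ofReal_ofNat]; exact hgL2
  have key := integral_mul_norm_le_Lp_mul_Lq (μ := (ℙ : Measure Ω)) h2 hfL2' hgL2'
  have hnormf : ∫ ω, ‖f ω‖ ^ (2 : ℝ) ∂ℙ = σ ^ 2 := by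
    rw [← hf2]
    congr 1 with ω
    rw [Real.rpow_two, Real.norm_eq_abs, sq_abs]
  have hnormg : ∫ ω, ‖g ω‖ ^ (2 : ℝ) ∂ℙ = β * (1 - β) := by
    rw [← hg2]
    congr 1 with ω
    rw [Real.rpow_two, Real.norm_eq_abs, sq_abs]
  rw [hnormf, hnormg] at key
  have hβprod : (0 : ℝ) ≤ β * (1 - β) := by nlinarith
  have hrhs : (σ ^ 2) ^ ((1 : ℝ) / 2) * (β * (1 - β)) ^ ((1 : ℝ) / 2) =
      σ * Real.sqrt (β * (1 - β)) := by
    rw [← Real.sqrt_eq_rpow, ← Real.sqrt_eq_rpow, Real.sqrt_sq hσ]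
  rw [hrhs] at key
  have hCS : |∫ ω, f ω * g ω ∂ℙ| ≤ σ * Real.sqrt (β * (1 - β)) := by
    refine le_trans ?_ key
    calc |∫ ω, f ω * g ω ∂ℙ| = ‖∫ ω, f ω * g ω ∂ℙ‖ := (Real.norm_eq_abs _).symm
      _ ≤ ∫ ω, ‖f ω * g ω‖ ∂ℙ := norm_integral_le_integral_norm _
      _ = ∫ ω, ‖f ω‖ * ‖g ω‖ ∂ℙ := by congr 1 with ω; rw [norm_mul]
  have hminint : ∫ ω, min (X ω) 0 ∂ℙ = ∫ ω, A.indicator X ω ∂ℙ := by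
    exact integral_congr_ae (Filter.Eventually.of_forall hmin)
  rw [hminint]
  have h1 := neg_abs_le (∫ ω, f ω * g ω ∂ℙ)
  linarith [hfg, hCS, h1]
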